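/- Weighted convolution boundedness (McOwen-type estimate): for -N/2 < t < s < N/2, the integral operator (Kf)(x) := ∫_{ℝᴺ} |x-y|^{s-t-N} f(y) dy maps L²_s(ℝᴺ) boundedly into L²_t(ℝᴺ), where L²_σ denotes the weighted L² space with norm ‖ρ^σ f‖_{L²}, ρ(x) = (1+|x|²)^{1/2}. -/

import Mathlib

/-!
STATEMENT 9: McOwen's weighted convolution estimate.  For `-N/2 < t < s < N/2` the
integral operator `(Kf)(x) = ∫ |x-y|^{s-t-N} f(y) dy` maps `L²_s(ℝᴺ)` boundedly into
`L²_t(ℝᴺ)`, where `L²_σ` carries the norm `‖ρ^σ f‖_{L²}` with `ρ(x) = (1+|x|²)^{1/2}`.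
-/

open MeasureTheory

open MeasureTheory Metric Set
open scoped ENNReal NNReal

noncomputable section

namespace McOwen

lemma Real.ennnorm_eq_ofReal {r : ℝ} (hr : 0 ≤ r) : ((‖r‖₊ : ℝ≥0) : ℝ≥0∞) = ENNReal.ofReal r :=
  _root_.Real.enorm_eq_ofReal hr

lemma finrank_E (N : ℕ) : Module.finrank ℝ (EuclideanSpace ℝ (Fin N)) = N := by
  simp [finrank_euclideanSpace]

lemma lintegral_comp_smul {N : ℕ} (g : EuclideanSpace ℝ (Fin N) → ℝ≥0∞) (hg : Measurable g)
    {R : ℝ} (hR : 0 < R) :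
    ∫⁻ z, g (R • z) = ENNReal.ofReal ((R ^ N)⁻¹) * ∫⁻ z, g z := by
  have hmap := Measure.map_addHaar_smul (volume : Measure (EuclideanSpace ℝ (Fin N)))
    (r := R) hR.ne'
  calc ∫⁻ z, g (R • z)
      = ∫⁻ y, g y ∂(Measure.map (R • ·) volume) :=
        (lintegral_map hg (measurable_const_smul R)).symm
    _ = ENNReal.ofReal ((R ^ N)⁻¹) * ∫⁻ z, g z := by
        rw [hmap, lintegral_smul_measure, finrank_E, abs_inv, abs_of_pos (pow_pos hR N), smul_eq_mul]
variable {N : ℕ}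

-- U1: finiteness on the unit ball, p ∈ (-N, 0)
lemma unit_ball_finite (hN : 1 ≤ N) {p : ℝ} (hp : -(N : ℝ) < p) (hp0 : p < 0) :
    ∫⁻ z in closedBall (0 : EuclideanSpace ℝ (Fin N)) 1, ENNReal.ofReal (‖z‖ ^ p) < ∞ := by
  set μr := (volume : Measure (EuclideanSpace ℝ (Fin N))).restrict (closedBall 0 1) with hμr
  have hmeas : Measurable fun z : EuclideanSpace ℝ (Fin N) => ‖z‖ ^ p := by fun_prop
  have hnn : 0 ≤ᵐ[μr] fun z : EuclideanSpace ℝ (Fin N) => ‖z‖ ^ p :=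
    Filter.Eventually.of_forall fun z => Real.rpow_nonneg (norm_nonneg _) _
  rw [lintegral_eq_lintegral_meas_le μr hnn hmeas.aemeasurable]
  have hsub : ∀ τ : ℝ, 0 < τ →
      {a : EuclideanSpace ℝ (Fin N) | τ ≤ ‖a‖ ^ p} ⊆ closedBall 0 (τ ^ p⁻¹) := by
    intro τ hτ a ha
    have ha' : a ≠ 0 := by
      rintro rfl
      simp only [mem_setOf_eq, norm_zero, Real.zero_rpow hp0.ne] at ha
      exact absurd (lt_of_lt_of_le hτ ha) (lt_irrefl 0)
    have hna : 0 < ‖a‖ := norm_pos_iff.mpr ha'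
    rw [mem_closedBall_zero_iff]
    exact (Real.le_rpow_inv_iff_of_neg hna hτ hp0).mpr ha
  calc ∫⁻ τ in Ioi (0:ℝ), μr {a | τ ≤ ‖a‖ ^ p}
      ≤ ∫⁻ τ in Ioc (0:ℝ) 1 ∪ Ioi 1, μr {a | τ ≤ ‖a‖ ^ p} :=
        lintegral_mono_set Ioi_subset_Ioc_union_Ioi
    _ ≤ (∫⁻ τ in Ioc (0:ℝ) 1, μr {a | τ ≤ ‖a‖ ^ p}) +
        ∫⁻ τ in Ioi (1:ℝ), μr {a | τ ≤ ‖a‖ ^ p} := lintegral_union_le _ _ _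
    _ < ∞ := by
      refine ENNReal.add_lt_top.2 ⟨?_, ?_⟩
      · calc (∫⁻ τ in Ioc (0:ℝ) 1, μr {a | τ ≤ ‖a‖ ^ p})
            ≤ ∫⁻ _ in Ioc (0:ℝ) 1, volume (closedBall (0 : EuclideanSpace ℝ (Fin N)) 1) := by
              refine setLIntegral_mono' measurableSet_Ioc fun τ hτ => ?_
              exact (measure_mono (subset_univ _)).trans
                (le_of_eq (Measure.restrict_apply_univ _))
          _ = volume (closedBall (0 : EuclideanSpace ℝ (Fin N)) 1) * volume (Ioc (0:ℝ) 1) := by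
              rw [setLIntegral_const]
          _ < ∞ := by
              refine ENNReal.mul_lt_top measure_closedBall_lt_top ?_
              simp [Real.volume_Ioc]
      · have hq : p⁻¹ * (N : ℝ) < -1 := by
          have hN1 : (1:ℝ) ≤ (N:ℝ) := by exact_mod_cast hN
          nlinarith [mul_inv_cancel₀ (ne_of_lt hp0), inv_lt_zero.mpr hp0]
        calc (∫⁻ τ in Ioi (1:ℝ), μr {a | τ ≤ ‖a‖ ^ p})
            ≤ ∫⁻ τ in Ioi (1:ℝ), ENNReal.ofReal (τ ^ (p⁻¹ * (N:ℝ))) *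
                volume (ball (0 : EuclideanSpace ℝ (Fin N)) 1) := by
              refine setLIntegral_mono' measurableSet_Ioi fun τ hτ => ?_
              have hτ0 : (0:ℝ) < τ := lt_trans one_pos hτ
              have h1 : μr {a | τ ≤ ‖a‖ ^ p} ≤
                  volume (closedBall (0 : EuclideanSpace ℝ (Fin N)) (τ ^ p⁻¹)) :=
                le_trans (Measure.restrict_apply_le _ _) (measure_mono (hsub τ hτ0))
              refine le_trans h1 ?_
              rw [Measure.addHaar_closedBall _ _ (Real.rpow_nonneg hτ0.le _), finrank_E]
              apply le_of_eq
              congr 1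
              rw [← Real.rpow_natCast (τ ^ p⁻¹) N, ← Real.rpow_mul hτ0.le]
          _ = (∫⁻ τ in Ioi (1:ℝ), ENNReal.ofReal (τ ^ (p⁻¹ * (N:ℝ)))) *
                volume (ball (0 : EuclideanSpace ℝ (Fin N)) 1) := by
              rw [lintegral_mul_const' _ _ measure_ball_lt_top.ne]
          _ < ∞ := by
              refine ENNReal.mul_lt_top ?_ measure_ball_lt_top
              exact (integrableOn_Ioi_rpow_of_lt hq one_pos).setLIntegral_lt_top

lemma scaled_integral {N : ℕ} {p : ℝ} {S : ℝ → Set (EuclideanSpace ℝ (Fin N))}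
    (hSm : ∀ R, MeasurableSet (S R)) {R : ℝ} (hR : 0 < R)
    (hS : ∀ z, (R • z ∈ S R ↔ z ∈ S 1)) :
    ∫⁻ z in S R, ENNReal.ofReal (‖z‖ ^ p) =
      ENNReal.ofReal (R ^ ((N : ℝ) + p)) * ∫⁻ z in S 1, ENNReal.ofReal (‖z‖ ^ p) := by
  set f : EuclideanSpace ℝ (Fin N) → ℝ≥0∞ := fun z => ENNReal.ofReal (‖z‖ ^ p) with hf
  have hfm : Measurable f := by fun_prop
  set g := (S R).indicator f with hgdef
  have hg : Measurable g := hfm.indicator (hSm R)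
  have hcomp : ∀ z, g (R • z) = ENNReal.ofReal (R ^ p) * (S 1).indicator f z := by
    intro z
    have hval : f (R • z) = ENNReal.ofReal (R ^ p) * f z := by
      simp only [hf, norm_smul, Real.norm_eq_abs, abs_of_pos hR,
        Real.mul_rpow hR.le (norm_nonneg z),
        ENNReal.ofReal_mul (Real.rpow_nonneg hR.le p)]
    by_cases hz : z ∈ S 1
    · rw [hgdef, indicator_of_mem ((hS z).mpr hz), indicator_of_mem hz, hval]
    · rw [hgdef, indicator_of_notMem (fun h => hz ((hS z).mp h)),
        indicator_of_notMem hz, mul_zero]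
  have hsc := lintegral_comp_smul g hg hR
  have h1 : ∫⁻ z, g (R • z) = ENNReal.ofReal (R ^ p) * ∫⁻ z in S 1, f z := by
    simp only [hcomp]
    rw [lintegral_const_mul _ (hfm.indicator (hSm 1)), lintegral_indicator (hSm 1) f]
  have h2 : ∫⁻ z, g z = ∫⁻ z in S R, f z := lintegral_indicator (hSm R) f
  have hcancel : ENNReal.ofReal (R ^ N) * ENNReal.ofReal ((R ^ N)⁻¹) = 1 := by
    rw [← ENNReal.ofReal_mul (by positivity), mul_inv_cancel₀ (by positivity),
      ENNReal.ofReal_one]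
  have hRN : ENNReal.ofReal (R ^ N) * ENNReal.ofReal (R ^ p) =
      ENNReal.ofReal (R ^ ((N : ℝ) + p)) := by
    rw [← ENNReal.ofReal_mul (by positivity), Real.rpow_add hR, Real.rpow_natCast]
  calc ∫⁻ z in S R, f z = 1 * ∫⁻ z in S R, f z := (one_mul _).symm
    _ = ENNReal.ofReal (R ^ N) * (ENNReal.ofReal ((R ^ N)⁻¹) * ∫⁻ z in S R, f z) := by
        rw [← mul_assoc, hcancel]
    _ = ENNReal.ofReal (R ^ N) * (ENNReal.ofReal (R ^ p) * ∫⁻ z in S 1, f z) := by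
        rw [← h2, ← hsc, h1]
    _ = ENNReal.ofReal (R ^ ((N : ℝ) + p)) * ∫⁻ z in S 1, f z := by
        rw [← mul_assoc, hRN]

-- U2 : finiteness outside the unit ball, q < -N
lemma unit_compl_finite {N : ℕ} {q : ℝ} (hq : q < -(N : ℝ)) :
    ∫⁻ z in (closedBall (0 : EuclideanSpace ℝ (Fin N)) 1)ᶜ, ENNReal.ofReal (‖z‖ ^ q) < ∞ := by
  have hq0 : q < 0 := lt_of_lt_of_le hq (neg_nonpos.mpr (Nat.cast_nonneg N))
  have hb : ∀ z : EuclideanSpace ℝ (Fin N), z ∈ (closedBall (0:EuclideanSpace ℝ (Fin N)) 1)ᶜ →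
      ENNReal.ofReal (‖z‖ ^ q) ≤
        ENNReal.ofReal ((2:ℝ) ^ (-q) * (1 + ‖z‖) ^ q) := by
    intro z hz
    rw [mem_compl_iff, mem_closedBall_zero_iff, not_le] at hz
    have hz0 : (0:ℝ) < ‖z‖ := lt_trans one_pos hz
    apply ENNReal.ofReal_le_ofReal
    have h2z : (2:ℝ) * ‖z‖ ^ q = (2:ℝ) ^ (1:ℝ) * ‖z‖ ^ q := by norm_num
    have key : ((2:ℝ) * ‖z‖) ^ q ≤ (1 + ‖z‖) ^ q := by
      apply Real.rpow_le_rpow_of_nonpos (by positivity) (by linarith) hq0.le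
    calc ‖z‖ ^ q = (2:ℝ) ^ (-q) * ((2:ℝ) ^ q * ‖z‖ ^ q) := by
          rw [← mul_assoc, ← Real.rpow_add two_pos]; simp
      _ = (2:ℝ) ^ (-q) * ((2:ℝ) * ‖z‖) ^ q := by
          rw [Real.mul_rpow two_pos.le hz0.le]
      _ ≤ (2:ℝ) ^ (-q) * (1 + ‖z‖) ^ q := by
          have : (0:ℝ) ≤ (2:ℝ) ^ (-q) := by positivity
          nlinarith [key]
  calc ∫⁻ z in (closedBall (0 : EuclideanSpace ℝ (Fin N)) 1)ᶜ, ENNReal.ofReal (‖z‖ ^ q)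
      ≤ ∫⁻ z in (closedBall (0 : EuclideanSpace ℝ (Fin N)) 1)ᶜ,
          ENNReal.ofReal ((2:ℝ) ^ (-q) * (1 + ‖z‖) ^ q) :=
        setLIntegral_mono' measurableSet_closedBall.compl hb
    _ ≤ ∫⁻ z : EuclideanSpace ℝ (Fin N), ENNReal.ofReal ((2:ℝ) ^ (-q) * (1 + ‖z‖) ^ q) :=
        setLIntegral_le_lintegral _ _
    _ = ENNReal.ofReal ((2:ℝ) ^ (-q)) *
          ∫⁻ z : EuclideanSpace ℝ (Fin N), ENNReal.ofReal ((1 + ‖z‖) ^ (-(-q))) := by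
        simp_rw [ENNReal.ofReal_mul (by positivity : (0:ℝ) ≤ (2:ℝ) ^ (-q)), neg_neg]
        rw [lintegral_const_mul _ (by fun_prop)]
    _ < ∞ := by
        refine ENNReal.mul_lt_top ENNReal.ofReal_lt_top ?_
        have : ((Module.finrank ℝ (EuclideanSpace ℝ (Fin N))) : ℝ) < -q := by
          rw [finrank_E]; linarith
        exact finite_integral_one_add_norm this

def rho {N : ℕ} (x : EuclideanSpace ℝ (Fin N)) : ℝ := Real.sqrt (1 + ‖x‖ ^ 2)

lemma one_le_rho (x : EuclideanSpace ℝ (Fin N)) : 1 ≤ rho x := by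
  have h : Real.sqrt 1 ≤ Real.sqrt (1 + ‖x‖ ^ 2) :=
    Real.sqrt_le_sqrt (by nlinarith [sq_nonneg ‖x‖])
  simpa [rho, Real.sqrt_one] using h

lemma rho_pos (x : EuclideanSpace ℝ (Fin N)) : 0 < rho x :=
  lt_of_lt_of_le one_pos (one_le_rho x)

lemma norm_le_rho (x : EuclideanSpace ℝ (Fin N)) : ‖x‖ ≤ rho x := by
  have h : ‖x‖ = Real.sqrt (‖x‖ ^ 2) := by
    rw [Real.sqrt_sq (norm_nonneg x)]
  rw [rho, h]
  exact Real.sqrt_le_sqrt (by nlinarith [Real.sq_sqrt (norm_nonneg x)])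

lemma rho_le (x : EuclideanSpace ℝ (Fin N)) : rho x ≤ 1 + ‖x‖ :=
  sqrt_one_add_norm_sq_le x

lemma rho_lower {x y : EuclideanSpace ℝ (Fin N)} (h : ‖x - y‖ ≤ rho x / 2) :
    rho x / 4 ≤ rho y := by
  have h1 := one_le_rho (N := N) y
  have h2 := norm_le_rho (N := N) y
  have h3 := rho_le (N := N) x
  have h4 : ‖x‖ - ‖y‖ ≤ ‖x - y‖ := norm_sub_norm_le x y
  rcases le_or_gt (rho x) 4 with h5 | h5
  · linarith
  · linarith

lemma rho_lower' {x y : EuclideanSpace ℝ (Fin N)} (h : 2 * rho x ≤ ‖x - y‖) :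
    ‖x - y‖ / 2 ≤ rho y := by
  have h2 := norm_le_rho (N := N) y
  have h3 := norm_le_rho (N := N) x
  have h4 : ‖x - y‖ ≤ ‖x‖ + ‖y‖ := norm_sub_le x y
  linarith


variable {N : ℕ}

lemma measurable_rho : Measurable (rho : EuclideanSpace ℝ (Fin N) → ℝ) := by
  unfold rho; fun_prop

lemma null_singleton (hN : 1 ≤ N) :
    (volume : Measure (EuclideanSpace ℝ (Fin N))) {(0 : EuclideanSpace ℝ (Fin N))} = 0 := by
  have h1 : ({(0 : EuclideanSpace ℝ (Fin N))} : Set (EuclideanSpace ℝ (Fin N))) ⊆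
      closedBall 0 0 := by
    intro z hz; simp only [Set.mem_singleton_iff] at hz; simp [hz]
  refine le_antisymm (le_trans (measure_mono h1) ?_) (zero_le)
  rw [Measure.addHaar_closedBall _ _ le_rfl, finrank_E,
    zero_pow (Nat.pos_iff_ne_zero.mp hN), ENNReal.ofReal_zero, zero_mul]

lemma translate_lintegral (x : EuclideanSpace ℝ (Fin N)) (f : EuclideanSpace ℝ (Fin N) → ℝ≥0∞)
    (hf : Measurable f) : ∫⁻ y, f (x - y) = ∫⁻ z, f z :=
  (Measure.measurePreserving_sub_left volume x).lintegral_comp hf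

lemma setLIntegral_translate (x : EuclideanSpace ℝ (Fin N))
    {S T : Set (EuclideanSpace ℝ (Fin N))} (hT : MeasurableSet T)
    (hST : ∀ y, x - y ∈ T ↔ y ∈ S) (f : EuclideanSpace ℝ (Fin N) → ℝ≥0∞) (hf : Measurable f) :
    ∫⁻ y in S, f (x - y) = ∫⁻ z in T, f z := by
  have hSeq : S = (fun y => x - y) ⁻¹' T := by
    ext y; simp only [Set.mem_preimage]; exact (hST y).symm
  have hS : MeasurableSet S := by
    rw [hSeq]; exact hT.preimage (by fun_prop)
  calc ∫⁻ y in S, f (x - y)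
      = ∫⁻ y, T.indicator f (x - y) := by
        rw [← lintegral_indicator hS]
        congr 1; ext y
        by_cases hy : y ∈ S
        · rw [Set.indicator_of_mem hy, Set.indicator_of_mem ((hST y).mpr hy)]
        · rw [Set.indicator_of_notMem hy,
            Set.indicator_of_notMem (fun h => hy ((hST y).mp h))]
    _ = ∫⁻ z, T.indicator f z := translate_lintegral x _ (hf.indicator hT)
    _ = ∫⁻ z in T, f z := lintegral_indicator hT f

lemma div_rpow_eq {u c : ℝ} (hu : 0 ≤ u) (hc : 0 ≤ c) (p : ℝ) :
    (u / c) ^ p = u ^ p * c ^ (-p) := by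
  rw [Real.div_rpow hu hc, Real.rpow_neg hc, div_eq_mul_inv]

lemma key_estimate (hN : 1 ≤ N) {a b : ℝ} (ha : 0 < a) (hab : a < b) (hbN : b < (N : ℝ)) :
    ∃ C : ℝ≥0∞, C ≠ ∞ ∧ ∀ x : EuclideanSpace ℝ (Fin N),
      ∫⁻ y, ENNReal.ofReal (‖x - y‖ ^ (a - (N : ℝ))) * ENNReal.ofReal (rho y ^ (-b)) ≤
        C * ENNReal.ofReal (rho x ^ (a - b)) := by
  have hNcast : (1:ℝ) ≤ (N:ℝ) := by exact_mod_cast hN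
  have haN : a - (N:ℝ) < 0 := by linarith
  have hb0 : 0 < b := lt_trans ha hab
  set c1p := ∫⁻ z in closedBall (0 : EuclideanSpace ℝ (Fin N)) 1,
    ENNReal.ofReal (‖z‖ ^ (a - (N:ℝ))) with hc1pdef
  have hc1p : c1p < ∞ := unit_ball_finite hN (by linarith) (by linarith)
  set c1b := ∫⁻ z in closedBall (0 : EuclideanSpace ℝ (Fin N)) 1,
    ENNReal.ofReal (‖z‖ ^ (-b)) with hc1bdef
  have hc1b : c1b < ∞ := unit_ball_finite hN (by linarith) (by linarith)
  set c2 := ∫⁻ z in (closedBall (0 : EuclideanSpace ℝ (Fin N)) 1)ᶜ,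
    ENNReal.ofReal (‖z‖ ^ (a - b - (N:ℝ))) with hc2def
  have hc2 : c2 < ∞ := unit_compl_finite (by linarith)
  refine ⟨ENNReal.ofReal ((4:ℝ) ^ b * 2 ^ (-a)) * c1p
    + ENNReal.ofReal ((2:ℝ) ^ ((N:ℝ) - a) * 3 ^ ((N:ℝ) - b)) * c1b
    + ENNReal.ofReal ((2:ℝ) ^ b * 2 ^ (a - b)) * c2, ?_, fun x => ?_⟩
  · exact ENNReal.add_ne_top.mpr ⟨ENNReal.add_ne_top.mpr
      ⟨ENNReal.mul_ne_top ENNReal.ofReal_ne_top hc1p.ne,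
        ENNReal.mul_ne_top ENNReal.ofReal_ne_top hc1b.ne⟩,
      ENNReal.mul_ne_top ENNReal.ofReal_ne_top hc2.ne⟩
  · set r := rho x with hrdef
    have hr : 0 < r := rho_pos x
    set g : EuclideanSpace ℝ (Fin N) → ℝ≥0∞ := fun y =>
      ENNReal.ofReal (‖x - y‖ ^ (a - (N:ℝ))) * ENNReal.ofReal (rho y ^ (-b)) with hgdef
    have hker : Measurable fun y : EuclideanSpace ℝ (Fin N) =>
        ENNReal.ofReal (‖x - y‖ ^ (a - (N:ℝ))) := by fun_prop
    have hrhom : Measurable fun y : EuclideanSpace ℝ (Fin N) =>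
        ENNReal.ofReal (rho y ^ (-b)) := by
      unfold rho
      fun_prop
    set A := closedBall x (r / 2) with hAdef
    set Bs := closedBall x (2 * r) ∩ Aᶜ with hBdef
    set Cs := (closedBall x (2 * r))ᶜ with hCdef
    have hAm : MeasurableSet A := measurableSet_closedBall
    have hBm : MeasurableSet Bs := measurableSet_closedBall.inter hAm.compl
    have hCm : MeasurableSet Cs := measurableSet_closedBall.compl
    -- Region A bound
    have hA : ∫⁻ y in A, g y ≤
        ENNReal.ofReal ((4:ℝ) ^ b * 2 ^ (-a)) * c1p * ENNReal.ofReal (r ^ (a - b)) := by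
      have step1 : ∫⁻ y in A, g y ≤
          ∫⁻ y in A, ENNReal.ofReal ((r / 4) ^ (-b)) *
            ENNReal.ofReal (‖x - y‖ ^ (a - (N:ℝ))) := by
        refine setLIntegral_mono' hAm fun y hy => ?_
        have hxy : ‖x - y‖ ≤ r / 2 := by
          rw [hAdef, mem_closedBall, dist_comm, dist_eq_norm] at hy
          exact hy
        have hrho : r / 4 ≤ rho y := rho_lower hxy
        show ENNReal.ofReal (‖x - y‖ ^ (a - (N:ℝ))) * ENNReal.ofReal (rho y ^ (-b)) ≤ _
        rw [mul_comm (ENNReal.ofReal ((r / 4) ^ (-b)))]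
        exact mul_le_mul_right (ENNReal.ofReal_le_ofReal
          (Real.rpow_le_rpow_of_nonpos (show (0:ℝ) < r / 4 by positivity) hrho
            (show -b ≤ 0 by linarith))) _
      have step2 : ∫⁻ y in A, ENNReal.ofReal ((r / 4) ^ (-b)) *
            ENNReal.ofReal (‖x - y‖ ^ (a - (N:ℝ))) =
          ENNReal.ofReal ((r / 4) ^ (-b)) *
            ∫⁻ y in A, ENNReal.ofReal (‖x - y‖ ^ (a - (N:ℝ))) :=
        lintegral_const_mul _ hker
      have step3 : ∫⁻ y in A, ENNReal.ofReal (‖x - y‖ ^ (a - (N:ℝ))) =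
          ∫⁻ z in closedBall (0 : EuclideanSpace ℝ (Fin N)) (r / 2),
            ENNReal.ofReal (‖z‖ ^ (a - (N:ℝ))) := by
        refine setLIntegral_translate x measurableSet_closedBall (fun y => ?_)
          (fun z => ENNReal.ofReal (‖z‖ ^ (a - (N:ℝ)))) (by fun_prop)
        rw [hAdef, mem_closedBall_zero_iff, mem_closedBall, dist_comm, dist_eq_norm]
      have step4 : ∫⁻ z in closedBall (0 : EuclideanSpace ℝ (Fin N)) (r / 2),
            ENNReal.ofReal (‖z‖ ^ (a - (N:ℝ))) =
          ENNReal.ofReal ((r / 2) ^ ((N:ℝ) + (a - (N:ℝ)))) * c1p := by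
        refine scaled_integral (S := fun R => closedBall (0 : EuclideanSpace ℝ (Fin N)) R)
          (fun R => measurableSet_closedBall) (show (0:ℝ) < r / 2 by positivity)
          fun z => ?_
        rw [mem_closedBall_zero_iff, mem_closedBall_zero_iff, norm_smul, Real.norm_eq_abs,
          abs_of_pos (show (0:ℝ) < r / 2 by positivity)]
        constructor
        · intro h; nlinarith [norm_nonneg z]
        · intro h; nlinarith [norm_nonneg z]
      have hreal : (r / 4) ^ (-b) * (r / 2) ^ ((N:ℝ) + (a - (N:ℝ))) =
          (4:ℝ) ^ b * 2 ^ (-a) * r ^ (a - b) := by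
        have e0 : (N:ℝ) + (a - (N:ℝ)) = a := by ring
        rw [e0, div_rpow_eq hr.le (by norm_num) (-b), div_rpow_eq hr.le (by norm_num) a,
          neg_neg]
        have e3 : r ^ (-b) * r ^ a = r ^ (a - b) := by
          rw [← Real.rpow_add hr]; ring_nf
        calc r ^ (-b) * 4 ^ b * (r ^ a * 2 ^ (-a))
            = 4 ^ b * 2 ^ (-a) * (r ^ (-b) * r ^ a) := by ring
          _ = 4 ^ b * 2 ^ (-a) * r ^ (a - b) := by rw [e3]
      calc ∫⁻ y in A, g y
          ≤ ENNReal.ofReal ((r / 4) ^ (-b)) *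
              (ENNReal.ofReal ((r / 2) ^ ((N:ℝ) + (a - (N:ℝ)))) * c1p) := by
            exact step1.trans (le_of_eq (by rw [step2, step3, step4]))
        _ = ENNReal.ofReal ((r / 4) ^ (-b) * (r / 2) ^ ((N:ℝ) + (a - (N:ℝ)))) * c1p := by
            rw [← mul_assoc, ← ENNReal.ofReal_mul (by positivity)]
        _ = ENNReal.ofReal ((4:ℝ) ^ b * 2 ^ (-a) * r ^ (a - b)) * c1p := by rw [hreal]
        _ = ENNReal.ofReal ((4:ℝ) ^ b * 2 ^ (-a)) * c1p * ENNReal.ofReal (r ^ (a - b)) := by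
            rw [ENNReal.ofReal_mul (by positivity)]; ring
    -- Region B bound
    have hB : ∫⁻ y in Bs, g y ≤
        ENNReal.ofReal ((2:ℝ) ^ ((N:ℝ) - a) * 3 ^ ((N:ℝ) - b)) * c1b *
          ENNReal.ofReal (r ^ (a - b)) := by
      have step1 : ∫⁻ y in Bs, g y ≤
          ∫⁻ y in Bs, ENNReal.ofReal ((r / 2) ^ (a - (N:ℝ))) *
            ENNReal.ofReal (rho y ^ (-b)) := by
        refine setLIntegral_mono' hBm fun y hy => ?_
        have hxy : r / 2 ≤ ‖x - y‖ := by
          rcases hy with ⟨-, hy2⟩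
          rw [hAdef] at hy2
          simp only [Set.mem_compl_iff, mem_closedBall, not_le, dist_comm, dist_eq_norm] at hy2
          exact le_of_lt hy2
        show ENNReal.ofReal (‖x - y‖ ^ (a - (N:ℝ))) * ENNReal.ofReal (rho y ^ (-b)) ≤ _
        exact mul_le_mul_left (ENNReal.ofReal_le_ofReal
          (Real.rpow_le_rpow_of_nonpos (show (0:ℝ) < r / 2 by positivity) hxy
            (show a - (N:ℝ) ≤ 0 by linarith))) _
      have step2 : ∫⁻ y in Bs, ENNReal.ofReal ((r / 2) ^ (a - (N:ℝ))) *
            ENNReal.ofReal (rho y ^ (-b)) =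
          ENNReal.ofReal ((r / 2) ^ (a - (N:ℝ))) *
            ∫⁻ y in Bs, ENNReal.ofReal (rho y ^ (-b)) :=
        lintegral_const_mul _ hrhom
      have step3 : ∫⁻ y in Bs, ENNReal.ofReal (rho y ^ (-b)) ≤
          ∫⁻ y in closedBall (0 : EuclideanSpace ℝ (Fin N)) (3 * r),
            ENNReal.ofReal (rho y ^ (-b)) := by
        refine lintegral_mono_set fun y hy => ?_
        rcases hy with ⟨hy1, -⟩
        rw [mem_closedBall, dist_eq_norm] at hy1
        rw [mem_closedBall_zero_iff]
        have h5 : ‖y‖ - ‖x‖ ≤ ‖y - x‖ := norm_sub_norm_le y x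
        have h6 : ‖x‖ ≤ r := norm_le_rho x
        linarith
      have step4 : ∫⁻ y in closedBall (0 : EuclideanSpace ℝ (Fin N)) (3 * r),
            ENNReal.ofReal (rho y ^ (-b)) ≤
          ∫⁻ y in closedBall (0 : EuclideanSpace ℝ (Fin N)) (3 * r),
            ENNReal.ofReal (‖y‖ ^ (-b)) := by
        refine setLIntegral_mono_ae (by fun_prop) ?_
        refine ae_iff.mpr (measure_mono_null (fun y hy => ?_) (null_singleton hN))
        simp only [Set.mem_setOf_eq] at hy
        rw [Set.mem_singleton_iff]
        by_contra hy0
        apply hy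
        intro _
        have hny : 0 < ‖y‖ := norm_pos_iff.mpr hy0
        exact ENNReal.ofReal_le_ofReal
          (Real.rpow_le_rpow_of_nonpos hny (norm_le_rho y) (by linarith))
      have step5 : ∫⁻ y in closedBall (0 : EuclideanSpace ℝ (Fin N)) (3 * r),
            ENNReal.ofReal (‖y‖ ^ (-b)) =
          ENNReal.ofReal ((3 * r) ^ ((N:ℝ) + -b)) * c1b := by
        refine scaled_integral (S := fun R => closedBall (0 : EuclideanSpace ℝ (Fin N)) R)
          (fun R => measurableSet_closedBall) (show (0:ℝ) < 3 * r by positivity)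
          fun z => ?_
        rw [mem_closedBall_zero_iff, mem_closedBall_zero_iff, norm_smul, Real.norm_eq_abs,
          abs_of_pos (show (0:ℝ) < 3 * r by positivity)]
        constructor
        · intro h; nlinarith [norm_nonneg z]
        · intro h; nlinarith [norm_nonneg z]
      have hreal : (r / 2) ^ (a - (N:ℝ)) * (3 * r) ^ ((N:ℝ) + -b) =
          (2:ℝ) ^ ((N:ℝ) - a) * 3 ^ ((N:ℝ) - b) * r ^ (a - b) := by
        have e0 : (N:ℝ) + -b = (N:ℝ) - b := by ring
        rw [e0, div_rpow_eq hr.le (by norm_num) (a - (N:ℝ)),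
          Real.mul_rpow (by norm_num) hr.le]
        have e1 : (2:ℝ) ^ (-(a - (N:ℝ))) = 2 ^ ((N:ℝ) - a) := by ring_nf
        have e3 : r ^ (a - (N:ℝ)) * r ^ ((N:ℝ) - b) = r ^ (a - b) := by
          rw [← Real.rpow_add hr]; ring_nf
        calc r ^ (a - (N:ℝ)) * 2 ^ (-(a - (N:ℝ))) * (3 ^ ((N:ℝ) - b) * r ^ ((N:ℝ) - b))
            = 2 ^ (-(a - (N:ℝ))) * 3 ^ ((N:ℝ) - b) * (r ^ (a - (N:ℝ)) * r ^ ((N:ℝ) - b)) := by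
              ring
          _ = (2:ℝ) ^ ((N:ℝ) - a) * 3 ^ ((N:ℝ) - b) * r ^ (a - b) := by rw [e1, e3]
      calc ∫⁻ y in Bs, g y
          ≤ ENNReal.ofReal ((r / 2) ^ (a - (N:ℝ))) *
              (ENNReal.ofReal ((3 * r) ^ ((N:ℝ) + -b)) * c1b) := by
            refine step1.trans ?_
            rw [step2]
            exact mul_le_mul_right ((step3.trans step4).trans (le_of_eq step5)) _
        _ = ENNReal.ofReal ((r / 2) ^ (a - (N:ℝ)) * (3 * r) ^ ((N:ℝ) + -b)) * c1b := by
            rw [← mul_assoc, ← ENNReal.ofReal_mul (by positivity)]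
        _ = ENNReal.ofReal ((2:ℝ) ^ ((N:ℝ) - a) * 3 ^ ((N:ℝ) - b) * r ^ (a - b)) * c1b := by
            rw [hreal]
        _ = ENNReal.ofReal ((2:ℝ) ^ ((N:ℝ) - a) * 3 ^ ((N:ℝ) - b)) * c1b *
              ENNReal.ofReal (r ^ (a - b)) := by
            rw [ENNReal.ofReal_mul (by positivity)]; ring
    -- Region C bound
    have hC : ∫⁻ y in Cs, g y ≤
        ENNReal.ofReal ((2:ℝ) ^ b * 2 ^ (a - b)) * c2 * ENNReal.ofReal (r ^ (a - b)) := by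
      have step1 : ∫⁻ y in Cs, g y ≤
          ∫⁻ y in Cs, ENNReal.ofReal ((2:ℝ) ^ b) *
            ENNReal.ofReal (‖x - y‖ ^ (a - b - (N:ℝ))) := by
        refine setLIntegral_mono' hCm fun y hy => ?_
        rw [hCdef] at hy
        simp only [Set.mem_compl_iff, mem_closedBall, not_le, dist_comm, dist_eq_norm] at hy
        have hxy : 2 * r ≤ ‖x - y‖ := le_of_lt hy
        have hu : 0 < ‖x - y‖ := lt_of_lt_of_le (by positivity : (0:ℝ) < 2 * r) hxy
        have hrho : ‖x - y‖ / 2 ≤ rho y := rho_lower' hxy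
        have h1 : ENNReal.ofReal (rho y ^ (-b)) ≤
            ENNReal.ofReal ((‖x - y‖ / 2) ^ (-b)) :=
          ENNReal.ofReal_le_ofReal
            (Real.rpow_le_rpow_of_nonpos (show (0:ℝ) < ‖x - y‖ / 2 by positivity) hrho
              (show -b ≤ 0 by linarith))
        have h2 : ‖x - y‖ ^ (a - (N:ℝ)) * (‖x - y‖ / 2) ^ (-b) =
            (2:ℝ) ^ b * ‖x - y‖ ^ (a - b - (N:ℝ)) := by
          rw [div_rpow_eq hu.le (by norm_num) (-b), neg_neg]
          have e3 : ‖x - y‖ ^ (a - (N:ℝ)) * ‖x - y‖ ^ (-b) =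
              ‖x - y‖ ^ (a - b - (N:ℝ)) := by
            rw [← Real.rpow_add hu]; ring_nf
          calc ‖x - y‖ ^ (a - (N:ℝ)) * (‖x - y‖ ^ (-b) * 2 ^ b)
              = (2:ℝ) ^ b * (‖x - y‖ ^ (a - (N:ℝ)) * ‖x - y‖ ^ (-b)) := by ring
            _ = (2:ℝ) ^ b * ‖x - y‖ ^ (a - b - (N:ℝ)) := by rw [e3]
        show ENNReal.ofReal (‖x - y‖ ^ (a - (N:ℝ))) * ENNReal.ofReal (rho y ^ (-b)) ≤ _
        calc ENNReal.ofReal (‖x - y‖ ^ (a - (N:ℝ))) * ENNReal.ofReal (rho y ^ (-b))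
            ≤ ENNReal.ofReal (‖x - y‖ ^ (a - (N:ℝ))) *
              ENNReal.ofReal ((‖x - y‖ / 2) ^ (-b)) := mul_le_mul_right h1 _
          _ = ENNReal.ofReal (‖x - y‖ ^ (a - (N:ℝ)) * (‖x - y‖ / 2) ^ (-b)) :=
            (ENNReal.ofReal_mul (by positivity)).symm
          _ = ENNReal.ofReal ((2:ℝ) ^ b * ‖x - y‖ ^ (a - b - (N:ℝ))) := by rw [h2]
          _ = ENNReal.ofReal ((2:ℝ) ^ b) *
              ENNReal.ofReal (‖x - y‖ ^ (a - b - (N:ℝ))) :=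
            ENNReal.ofReal_mul (by positivity)
      have step2 : ∫⁻ y in Cs, ENNReal.ofReal ((2:ℝ) ^ b) *
            ENNReal.ofReal (‖x - y‖ ^ (a - b - (N:ℝ))) =
          ENNReal.ofReal ((2:ℝ) ^ b) *
            ∫⁻ y in Cs, ENNReal.ofReal (‖x - y‖ ^ (a - b - (N:ℝ))) :=
        lintegral_const_mul _ (by fun_prop)
      have step3 : ∫⁻ y in Cs, ENNReal.ofReal (‖x - y‖ ^ (a - b - (N:ℝ))) =
          ∫⁻ z in (closedBall (0 : EuclideanSpace ℝ (Fin N)) (2 * r))ᶜ,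
            ENNReal.ofReal (‖z‖ ^ (a - b - (N:ℝ))) := by
        refine setLIntegral_translate x measurableSet_closedBall.compl (fun y => ?_)
          (fun z => ENNReal.ofReal (‖z‖ ^ (a - b - (N:ℝ)))) (by fun_prop)
        rw [hCdef]
        simp only [Set.mem_compl_iff, mem_closedBall_zero_iff, mem_closedBall, dist_comm,
          dist_eq_norm, sub_zero]
      have step4 : ∫⁻ z in (closedBall (0 : EuclideanSpace ℝ (Fin N)) (2 * r))ᶜ,
            ENNReal.ofReal (‖z‖ ^ (a - b - (N:ℝ))) =
          ENNReal.ofReal ((2 * r) ^ ((N:ℝ) + (a - b - (N:ℝ)))) * c2 := by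
        refine scaled_integral (S := fun R => (closedBall (0 : EuclideanSpace ℝ (Fin N)) R)ᶜ)
          (fun R => measurableSet_closedBall.compl) (show (0:ℝ) < 2 * r by positivity)
          fun z => ?_
        simp only [Set.mem_compl_iff, mem_closedBall_zero_iff, norm_smul, Real.norm_eq_abs,
          abs_of_pos (show (0:ℝ) < 2 * r by positivity)]
        constructor
        · intro h h'; exact h (by nlinarith [norm_nonneg z])
        · intro h h'; exact h (by nlinarith [norm_nonneg z])
      have hreal : (2:ℝ) ^ b * (2 * r) ^ ((N:ℝ) + (a - b - (N:ℝ))) =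
          (2:ℝ) ^ b * 2 ^ (a - b) * r ^ (a - b) := by
        have e0 : (N:ℝ) + (a - b - (N:ℝ)) = a - b := by ring
        rw [e0, Real.mul_rpow (by norm_num) hr.le]
        ring
      calc ∫⁻ y in Cs, g y
          ≤ ENNReal.ofReal ((2:ℝ) ^ b) *
              (ENNReal.ofReal ((2 * r) ^ ((N:ℝ) + (a - b - (N:ℝ)))) * c2) := by
            refine step1.trans (le_of_eq ?_)
            rw [step2, step3, step4]
        _ = ENNReal.ofReal ((2:ℝ) ^ b * (2 * r) ^ ((N:ℝ) + (a - b - (N:ℝ)))) * c2 := by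
            rw [← mul_assoc, ← ENNReal.ofReal_mul (by positivity)]
        _ = ENNReal.ofReal ((2:ℝ) ^ b * 2 ^ (a - b) * r ^ (a - b)) * c2 := by rw [hreal]
        _ = ENNReal.ofReal ((2:ℝ) ^ b * 2 ^ (a - b)) * c2 * ENNReal.ofReal (r ^ (a - b)) := by
            rw [ENNReal.ofReal_mul (by positivity)]; ring
    -- Combine
    have hcover : (Set.univ : Set (EuclideanSpace ℝ (Fin N))) ⊆ A ∪ Bs ∪ Cs := by
      intro y _
      by_cases h1 : y ∈ A
      · exact Or.inl (Or.inl h1)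
      by_cases h2 : y ∈ closedBall x (2 * r)
      · exact Or.inl (Or.inr ⟨h2, h1⟩)
      · exact Or.inr h2
    calc ∫⁻ y, g y = ∫⁻ y in Set.univ, g y := (setLIntegral_univ _).symm
      _ ≤ ∫⁻ y in A ∪ Bs ∪ Cs, g y := lintegral_mono_set hcover
      _ ≤ (∫⁻ y in A ∪ Bs, g y) + ∫⁻ y in Cs, g y := lintegral_union_le _ _ _
      _ ≤ ((∫⁻ y in A, g y) + ∫⁻ y in Bs, g y) + ∫⁻ y in Cs, g y :=
        add_le_add_left (lintegral_union_le _ _ _) _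
      _ ≤ (ENNReal.ofReal ((4:ℝ) ^ b * 2 ^ (-a)) * c1p * ENNReal.ofReal (r ^ (a - b))
            + ENNReal.ofReal ((2:ℝ) ^ ((N:ℝ) - a) * 3 ^ ((N:ℝ) - b)) * c1b *
                ENNReal.ofReal (r ^ (a - b)))
          + ENNReal.ofReal ((2:ℝ) ^ b * 2 ^ (a - b)) * c2 * ENNReal.ofReal (r ^ (a - b)) :=
        add_le_add (add_le_add hA hB) hC
      _ = (ENNReal.ofReal ((4:ℝ) ^ b * 2 ^ (-a)) * c1p
            + ENNReal.ofReal ((2:ℝ) ^ ((N:ℝ) - a) * 3 ^ ((N:ℝ) - b)) * c1b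
            + ENNReal.ofReal ((2:ℝ) ^ b * 2 ^ (a - b)) * c2) *
          ENNReal.ofReal (r ^ (a - b)) := by ring

attribute [fun_prop] measurable_rho

lemma base_rpow (x : EuclideanSpace ℝ (Fin N)) (σ : ℝ) :
    ((1 : ℝ) + ‖x‖ ^ 2) ^ (σ / 2) = rho x ^ σ :=
  Real.rpow_div_two_eq_sqrt σ (by positivity)

lemma wmul (σ τ : ℝ) (x : EuclideanSpace ℝ (Fin N)) :
    ENNReal.ofReal (rho x ^ σ) * ENNReal.ofReal (rho x ^ τ) =
      ENNReal.ofReal (rho x ^ (σ + τ)) := by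
  rw [← ENNReal.ofReal_mul (Real.rpow_nonneg (rho_pos x).le _), ← Real.rpow_add (rho_pos x)]

lemma wpow (σ p : ℝ) (x : EuclideanSpace ℝ (Fin N)) :
    ENNReal.ofReal (rho x ^ σ) ^ p = ENNReal.ofReal (rho x ^ (σ * p)) := by
  rw [ENNReal.ofReal_rpow_of_pos (Real.rpow_pos_of_pos (rho_pos x) σ),
    ← Real.rpow_mul (rho_pos x).le]

theorem mcowen_main
    (N : ℕ) (hN : 1 ≤ N) (s t : ℝ)
    (h1 : -(N : ℝ) / 2 < t) (h2 : t < s) (h3 : s < (N : ℝ) / 2) :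
    ∃ C > (0 : ℝ), ∀ f : EuclideanSpace ℝ (Fin N) → ℝ,
      AEStronglyMeasurable f volume →
      eLpNorm (fun x => (1 + ‖x‖ ^ 2) ^ (t / 2) *
          ∫ y : EuclideanSpace ℝ (Fin N), ‖x - y‖ ^ (s - t - (N : ℝ)) * f y) 2 volume ≤
        ENNReal.ofReal C *
          eLpNorm (fun x => (1 + ‖x‖ ^ 2) ^ (s / 2) * f x) 2 volume := by
  have hNcast : (1:ℝ) ≤ (N:ℝ) := by exact_mod_cast hN
  have ha : 0 < s - t := by linarith
  set b1 := (max (s - t) (2*s) + min ((N:ℝ)) ((N:ℝ) + s + t)) / 2 with hb1def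
  have hmaxmin : max (s - t) (2*s) < min ((N:ℝ)) ((N:ℝ) + s + t) := by
    apply max_lt <;> apply lt_min <;> linarith
  have hab1 : s - t < b1 := by
    have h := le_max_left (s - t) (2*s); rw [hb1def]; linarith
  have hb1N : b1 < (N:ℝ) := by
    have h := min_le_left ((N:ℝ)) ((N:ℝ) + s + t); rw [hb1def]; linarith
  set b2 := b1 - (s + t) with hb2def
  have hab2 : s - t < b2 := by
    have h := le_max_right (s - t) (2*s); rw [hb2def, hb1def]; linarith
  have hb2N : b2 < (N:ℝ) := by
    have h := min_le_right ((N:ℝ)) ((N:ℝ) + s + t); rw [hb2def, hb1def]; linarith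
  obtain ⟨C1, hC1top, hC1⟩ := key_estimate hN ha hab1 hb1N
  obtain ⟨C2, hC2top, hC2⟩ := key_estimate hN ha hab2 hb2N
  set CC := ((C1 * C2) ^ ((1:ℝ)/2)).toReal + 1 with hCCdef
  have hCC0 : 0 < CC :=
    lt_of_lt_of_le one_pos (le_add_of_nonneg_left ENNReal.toReal_nonneg)
  refine ⟨CC, hCC0, fun f hf => ?_⟩
  -- replace f by a measurable representative
  set g := hf.mk f with hgdef
  have hgm : Measurable g := hf.stronglyMeasurable_mk.measurable
  have hfg : f =ᵐ[volume] g := hf.ae_eq_mk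
  have hL : (fun x => ((1:ℝ) + ‖x‖ ^ 2) ^ (t / 2) *
        ∫ y : EuclideanSpace ℝ (Fin N), ‖x - y‖ ^ (s - t - (N : ℝ)) * f y)
      = fun x => ((1:ℝ) + ‖x‖ ^ 2) ^ (t / 2) *
        ∫ y : EuclideanSpace ℝ (Fin N), ‖x - y‖ ^ (s - t - (N : ℝ)) * g y := by
    funext x
    congr 1
    exact integral_congr_ae (hfg.mono fun y hy => by simp only [hy])
  have hR : eLpNorm (fun x => ((1:ℝ) + ‖x‖ ^ 2) ^ (s / 2) * f x) 2 volume =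
      eLpNorm (fun x => ((1:ℝ) + ‖x‖ ^ 2) ^ (s / 2) * g x) 2 volume :=
    eLpNorm_congr_ae (hfg.mono fun x hx => by simp only [hx])
  rw [hL, hR]
  -- now everything is measurable
  set F : EuclideanSpace ℝ (Fin N) → ℝ≥0∞ := fun y => (‖g y‖₊ : ℝ≥0∞) with hFdef
  have hFm : Measurable F := hgm.nnnorm.coe_nnreal_ennreal
  set K : EuclideanSpace ℝ (Fin N) → EuclideanSpace ℝ (Fin N) → ℝ≥0∞ :=
    fun x y => ENNReal.ofReal (‖x - y‖ ^ (s - t - (N:ℝ))) with hKdef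
  have hKm : Measurable fun p : EuclideanSpace ℝ (Fin N) × EuclideanSpace ℝ (Fin N) =>
      K p.1 p.2 := by
    rw [hKdef]; fun_prop
  have hKm1 : ∀ x, Measurable fun y => K x y := fun x => by rw [hKdef]; fun_prop
  have hKm2 : ∀ y, Measurable fun x => K x y := fun y => by rw [hKdef]; fun_prop
  set w : ℝ → EuclideanSpace ℝ (Fin N) → ℝ≥0∞ :=
    fun σ x => ENNReal.ofReal (rho x ^ σ) with hwdef
  have hwm : ∀ σ, Measurable (w σ) := fun σ => by rw [hwdef]; fun_prop
  set H : EuclideanSpace ℝ (Fin N) → ℝ≥0∞ :=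
    fun x => ∫⁻ y, K x y * w b1 y * F y ^ (2:ℝ) with hHdef
  have hHm : Measurable H := by
    rw [hHdef]
    exact Measurable.lintegral_prod_right
      ((hKm.mul ((hwm b1).comp measurable_snd)).mul
        ((hFm.comp measurable_snd).pow_const _))
  -- Cauchy-Schwarz in y
  have hCS : ∀ x, (∫⁻ y, K x y * F y) ≤
      (C1 * w (s - t - b1) x) ^ ((1:ℝ)/2) * H x ^ ((1:ℝ)/2) := by
    intro x
    have hsplit : ∀ y, K x y * F y =
        (K x y ^ ((2:ℝ)⁻¹) * w (-(b1/2)) y) * (K x y ^ ((2:ℝ)⁻¹) * w (b1/2) y * F y) := by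
      intro y
      have hK2 : K x y ^ ((2:ℝ)⁻¹) * K x y ^ ((2:ℝ)⁻¹) = K x y := by
        rw [← ENNReal.rpow_add_of_nonneg _ _ (by norm_num) (by norm_num)]
        norm_num
      have hw1 : w (-(b1/2)) y * w (b1/2) y = 1 := by
        rw [hwdef]; simp only []; rw [wmul]; simp
      calc K x y * F y = (K x y ^ ((2:ℝ)⁻¹) * K x y ^ ((2:ℝ)⁻¹)) *
            (w (-(b1/2)) y * w (b1/2) y) * F y := by rw [hK2, hw1, mul_one]
        _ = (K x y ^ ((2:ℝ)⁻¹) * w (-(b1/2)) y) *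
            (K x y ^ ((2:ℝ)⁻¹) * w (b1/2) y * F y) := by ring
    have hm1 : AEMeasurable (fun y => K x y ^ ((2:ℝ)⁻¹) * w (-(b1/2)) y) volume :=
      (((hKm1 x).pow_const _).mul (hwm _)).aemeasurable
    have hm2 : AEMeasurable (fun y => K x y ^ ((2:ℝ)⁻¹) * w (b1/2) y * F y) volume :=
      ((((hKm1 x).pow_const _).mul (hwm _)).mul hFm).aemeasurable
    have hconj : Real.HolderConjugate 2 2 := Real.HolderConjugate.two_two
    have hHolder := ENNReal.lintegral_mul_le_Lp_mul_Lq volume hconj hm1 hm2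
    have e1 : ∀ y, (K x y ^ ((2:ℝ)⁻¹) * w (-(b1/2)) y) ^ (2:ℝ) =
        K x y * w (-b1) y := by
      intro y
      rw [ENNReal.mul_rpow_of_nonneg _ _ (by norm_num : (0:ℝ) ≤ 2), ← ENNReal.rpow_mul,
        show ((2:ℝ)⁻¹ * 2) = (1:ℝ) by norm_num, ENNReal.rpow_one, hwdef]
      simp only []
      rw [wpow, show (-(b1/2) * 2) = -b1 by ring]
    have e2 : ∀ y, (K x y ^ ((2:ℝ)⁻¹) * w (b1/2) y * F y) ^ (2:ℝ) =
        K x y * w b1 y * F y ^ (2:ℝ) := by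
      intro y
      rw [ENNReal.mul_rpow_of_nonneg _ _ (by norm_num : (0:ℝ) ≤ 2),
        ENNReal.mul_rpow_of_nonneg _ _ (by norm_num : (0:ℝ) ≤ 2),
        ← ENNReal.rpow_mul,
        show ((2:ℝ)⁻¹ * 2) = (1:ℝ) by norm_num, ENNReal.rpow_one, hwdef]
      simp only []
      rw [wpow, show (b1/2 * 2) = b1 by ring]
    calc ∫⁻ y, K x y * F y
        = ∫⁻ y, (K x y ^ ((2:ℝ)⁻¹) * w (-(b1/2)) y) *
            (K x y ^ ((2:ℝ)⁻¹) * w (b1/2) y * F y) := lintegral_congr hsplit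
      _ ≤ (∫⁻ y, (K x y ^ ((2:ℝ)⁻¹) * w (-(b1/2)) y) ^ (2:ℝ)) ^ ((1:ℝ)/2) *
          (∫⁻ y, (K x y ^ ((2:ℝ)⁻¹) * w (b1/2) y * F y) ^ (2:ℝ)) ^ ((1:ℝ)/2) := hHolder
      _ = (∫⁻ y, K x y * w (-b1) y) ^ ((1:ℝ)/2) * H x ^ ((1:ℝ)/2) := by
          rw [lintegral_congr e1, lintegral_congr e2, hHdef]
      _ ≤ (C1 * w (s - t - b1) x) ^ ((1:ℝ)/2) * H x ^ ((1:ℝ)/2) := by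
          refine mul_le_mul_left (ENNReal.rpow_le_rpow ?_ (by norm_num)) _
          have := hC1 x
          rw [hKdef, hwdef]
          simp only []
          convert this using 2 <;> ring_nf
  -- pointwise bound on the lhs integrand
  have hpt : ∀ x : EuclideanSpace ℝ (Fin N),
      ((‖((1:ℝ) + ‖x‖ ^ 2) ^ (t / 2) *
        ∫ y : EuclideanSpace ℝ (Fin N), ‖x - y‖ ^ (s - t - (N : ℝ)) * g y‖₊ : ℝ≥0) : ℝ≥0∞) ≤
      w t x * ∫⁻ y, K x y * F y := by
    intro x
    rw [nnnorm_mul, ENNReal.coe_mul]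
    have hbase : ((‖((1:ℝ) + ‖x‖ ^ 2) ^ (t / 2)‖₊ : ℝ≥0) : ℝ≥0∞) = w t x := by
      rw [Real.ennnorm_eq_ofReal (by positivity), base_rpow, hwdef]
    rw [hbase]
    refine mul_le_mul_right ?_ _
    calc ((‖∫ y : EuclideanSpace ℝ (Fin N), ‖x - y‖ ^ (s - t - (N : ℝ)) * g y‖₊ : ℝ≥0) : ℝ≥0∞)
        ≤ ∫⁻ y, (‖‖x - y‖ ^ (s - t - (N : ℝ)) * g y‖₊ : ℝ≥0∞) :=
          enorm_integral_le_lintegral_enorm _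
      _ = ∫⁻ y, K x y * F y := by
          refine lintegral_congr fun y => ?_
          rw [nnnorm_mul, ENNReal.coe_mul,
            Real.ennnorm_eq_ofReal (Real.rpow_nonneg (norm_nonneg _) _), hKdef, hFdef]
  -- squared pointwise bound
  have hsq : ∀ x, (w t x * ∫⁻ y, K x y * F y) ^ (2:ℝ) ≤ C1 * (w (-b2) x * H x) := by
    intro x
    calc (w t x * ∫⁻ y, K x y * F y) ^ (2:ℝ)
        ≤ (w t x * ((C1 * w (s - t - b1) x) ^ ((1:ℝ)/2) * H x ^ ((1:ℝ)/2))) ^ (2:ℝ) :=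
          ENNReal.rpow_le_rpow (mul_le_mul_right (hCS x) _) (by norm_num)
      _ = w t x ^ (2:ℝ) * ((C1 * w (s - t - b1) x) * H x) := by
          rw [ENNReal.mul_rpow_of_nonneg _ _ (by norm_num : (0:ℝ) ≤ 2),
            ENNReal.mul_rpow_of_nonneg _ _ (by norm_num : (0:ℝ) ≤ 2),
            ← ENNReal.rpow_mul, ← ENNReal.rpow_mul,
            show ((1:ℝ)/2 * 2) = (1:ℝ) by norm_num, ENNReal.rpow_one, ENNReal.rpow_one]
      _ = C1 * (w (-b2) x * H x) := by
          rw [hwdef]; simp only []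
          rw [wpow,
            show ENNReal.ofReal (rho x ^ (t * 2)) *
                (C1 * ENNReal.ofReal (rho x ^ (s - t - b1)) * H x) =
              C1 * ((ENNReal.ofReal (rho x ^ (t * 2)) *
                ENNReal.ofReal (rho x ^ (s - t - b1))) * H x) by ring,
            wmul, show (t * 2 + (s - t - b1)) = -b2 by rw [hb2def]; ring]
  -- integrate the squared bound
  have hmono1 : ∫⁻ x, ((‖((1:ℝ) + ‖x‖ ^ 2) ^ (t / 2) *
        ∫ y : EuclideanSpace ℝ (Fin N), ‖x - y‖ ^ (s - t - (N : ℝ)) * g y‖₊ : ℝ≥0) : ℝ≥0∞)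
          ^ (2:ℝ) ≤
      C1 * ∫⁻ x, w (-b2) x * H x := by
    calc ∫⁻ x, ((‖((1:ℝ) + ‖x‖ ^ 2) ^ (t / 2) *
          ∫ y : EuclideanSpace ℝ (Fin N), ‖x - y‖ ^ (s - t - (N : ℝ)) * g y‖₊ : ℝ≥0) : ℝ≥0∞)
            ^ (2:ℝ)
        ≤ ∫⁻ x, (w t x * ∫⁻ y, K x y * F y) ^ (2:ℝ) :=
          lintegral_mono fun x => ENNReal.rpow_le_rpow (hpt x) (by norm_num)
      _ ≤ ∫⁻ x, C1 * (w (-b2) x * H x) := lintegral_mono hsq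
      _ = C1 * ∫⁻ x, w (-b2) x * H x := lintegral_const_mul _ ((hwm _).mul hHm)
  -- Tonelli and the dual estimate
  have hswap : ∫⁻ x, w (-b2) x * H x ≤ C2 * ∫⁻ y, w (2*s) y * F y ^ (2:ℝ) := by
    have h1 : ∀ x, w (-b2) x * H x =
        ∫⁻ y, w (-b2) x * K x y * (w b1 y * F y ^ (2:ℝ)) := by
      intro x
      rw [hHdef]; simp only []
      rw [← lintegral_const_mul (f := fun y => K x y * w b1 y * F y ^ (2:ℝ)) _ (((hKm1 x).mul (hwm b1)).mul (hFm.pow_const _))]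
      exact lintegral_congr fun y => by ring
    have hprodm : Measurable fun p : EuclideanSpace ℝ (Fin N) × EuclideanSpace ℝ (Fin N) =>
        w (-b2) p.1 * K p.1 p.2 * (w b1 p.2 * F p.2 ^ (2:ℝ)) :=
      ((((hwm (-b2)).comp measurable_fst).mul hKm).mul
        (((hwm b1).comp measurable_snd).mul ((hFm.comp measurable_snd).pow_const _)))
    calc ∫⁻ x, w (-b2) x * H x
        = ∫⁻ x, ∫⁻ y, w (-b2) x * K x y * (w b1 y * F y ^ (2:ℝ)) := lintegral_congr h1
      _ = ∫⁻ y, ∫⁻ x, w (-b2) x * K x y * (w b1 y * F y ^ (2:ℝ)) :=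
          lintegral_lintegral_swap hprodm.aemeasurable
      _ = ∫⁻ y, (∫⁻ x, w (-b2) x * K x y) * (w b1 y * F y ^ (2:ℝ)) :=
          lintegral_congr fun y => lintegral_mul_const _ ((hwm _).mul (hKm2 y))
      _ ≤ ∫⁻ y, (C2 * w (s - t - b2) y) * (w b1 y * F y ^ (2:ℝ)) := by
          refine lintegral_mono fun y => mul_le_mul_left ?_ _
          calc ∫⁻ x, w (-b2) x * K x y
              = ∫⁻ x, ENNReal.ofReal (‖y - x‖ ^ (s - t - (N:ℝ))) *
                  ENNReal.ofReal (rho x ^ (-b2)) := by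
                refine lintegral_congr fun x => ?_
                rw [hKdef, hwdef]; simp only []
                rw [mul_comm, norm_sub_rev]
            _ ≤ C2 * ENNReal.ofReal (rho y ^ (s - t - b2)) := hC2 y
            _ = C2 * w (s - t - b2) y := by rw [hwdef]
      _ = C2 * ∫⁻ y, w (2*s) y * F y ^ (2:ℝ) := by
          rw [← lintegral_const_mul (f := fun y => w (2*s) y * F y ^ (2:ℝ)) _ ((hwm _).mul (hFm.pow_const _))]
          refine lintegral_congr fun y => ?_
          rw [show (C2 * w (s - t - b2) y) * (w b1 y * F y ^ (2:ℝ)) =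
              C2 * ((w (s - t - b2) y * w b1 y) * F y ^ (2:ℝ)) by ring, hwdef]
          simp only []
          rw [wmul, show (s - t - b2 + b1) = 2*s by rw [hb2def]; ring]
  -- identify the RHS integrand
  have hRHSpt : ∀ y : EuclideanSpace ℝ (Fin N),
      ((‖((1:ℝ) + ‖y‖ ^ 2) ^ (s / 2) * g y‖₊ : ℝ≥0) : ℝ≥0∞) ^ (2:ℝ) =
        w (2*s) y * F y ^ (2:ℝ) := by
    intro y
    rw [nnnorm_mul, ENNReal.coe_mul, Real.ennnorm_eq_ofReal (by positivity), base_rpow,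
      ENNReal.mul_rpow_of_nonneg _ _ (by norm_num : (0:ℝ) ≤ 2), hwdef]
    simp only []
    rw [wpow, show (s * 2) = 2*s by ring, hFdef]
  -- conclude
  rw [eLpNorm_eq_lintegral_rpow_enorm_toReal two_ne_zero ENNReal.ofNat_ne_top,
    eLpNorm_eq_lintegral_rpow_enorm_toReal two_ne_zero ENNReal.ofNat_ne_top]
  simp only [ENNReal.toReal_ofNat]
  have hfin : (C1 * C2) ^ ((1:ℝ)/2) ≠ ∞ :=
    ENNReal.rpow_ne_top_of_nonneg (by norm_num) (ENNReal.mul_ne_top hC1top hC2top)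
  have hle : (C1 * C2) ^ ((1:ℝ)/2) ≤ ENNReal.ofReal CC := by
    calc (C1 * C2) ^ ((1:ℝ)/2)
        = ENNReal.ofReal (((C1 * C2) ^ ((1:ℝ)/2)).toReal) := (ENNReal.ofReal_toReal hfin).symm
      _ ≤ ENNReal.ofReal CC := by
          refine ENNReal.ofReal_le_ofReal ?_
          rw [hCCdef]; linarith
  calc (∫⁻ x, ((‖((1:ℝ) + ‖x‖ ^ 2) ^ (t / 2) *
        ∫ y : EuclideanSpace ℝ (Fin N), ‖x - y‖ ^ (s - t - (N : ℝ)) * g y‖₊ : ℝ≥0) : ℝ≥0∞)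
          ^ (2:ℝ)) ^ ((1:ℝ)/2)
      ≤ (C1 * (C2 * ∫⁻ y, w (2*s) y * F y ^ (2:ℝ))) ^ ((1:ℝ)/2) :=
        ENNReal.rpow_le_rpow (hmono1.trans (mul_le_mul_right hswap _)) (by norm_num)
    _ = (C1 * C2) ^ ((1:ℝ)/2) * (∫⁻ y, w (2*s) y * F y ^ (2:ℝ)) ^ ((1:ℝ)/2) := by
        rw [← mul_assoc, ENNReal.mul_rpow_of_nonneg _ _ (by norm_num : (0:ℝ) ≤ 1/2)]
    _ ≤ ENNReal.ofReal CC * (∫⁻ y, w (2*s) y * F y ^ (2:ℝ)) ^ ((1:ℝ)/2) :=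
        mul_le_mul_left hle _
    _ = ENNReal.ofReal CC * (∫⁻ y, ((‖((1:ℝ) + ‖y‖ ^ 2) ^ (s / 2) * g y‖₊ : ℝ≥0) : ℝ≥0∞)
          ^ (2:ℝ)) ^ ((1:ℝ)/2) := by
        rw [lintegral_congr hRHSpt]


end McOwen

end

theorem mcowen_weighted_kernel_estimate
    (N : ℕ) (hN : 1 ≤ N) (s t : ℝ)
    (h1 : -(N : ℝ) / 2 < t) (h2 : t < s) (h3 : s < (N : ℝ) / 2) :
    ∃ C > (0 : ℝ), ∀ f : EuclideanSpace ℝ (Fin N) → ℝ,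
      AEStronglyMeasurable f volume →
      eLpNorm (fun x => (1 + ‖x‖ ^ 2) ^ (t / 2) *
          ∫ y : EuclideanSpace ℝ (Fin N), ‖x - y‖ ^ (s - t - (N : ℝ)) * f y) 2 volume ≤
        ENNReal.ofReal C *
          eLpNorm (fun x => (1 + ‖x‖ ^ 2) ^ (s / 2) * f x) 2 volume := by
  exact McOwen.mcowen_main N hN s t h1 h2 h3
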